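/- Let G be a topological group and let H₁, …, H_k be subgroups that boundedly generate G. Let E be a uniformly convex real Banach space, and assume that each pair (G, H_i), i = 1, …, k, has relative property (T_E). Then for every continuous linear isometric representation π of G on E such that the only vector ξ ∈ E with π(g)ξ = ξ for all g ∈ G is ξ = 0, there exist a compact subset K ⊆ G and a constant ε > 0 such that for every ξ ∈ E with ‖ξ‖ = 1 one has sup_{g ∈ K} ‖π(g)ξ − ξ‖ ≥ ε. -/

import Mathlib

/-- A real normed space `E` is *uniformly convex* if for every `ε ∈ (0,2]` there is `δ > 0`
such that all unit vectors `ξ, η` with `‖ξ - η‖ ≥ ε` satisfy `‖(ξ + η)/2‖ ≤ 1 - δ`. -/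
def UniformlyConvex (E : Type*) [NormedAddCommGroup E] [NormedSpace ℝ E] : Prop :=
  ∀ ε : ℝ, 0 < ε → ε ≤ 2 → ∃ δ : ℝ, 0 < δ ∧
    ∀ ξ η : E, ‖ξ‖ = 1 → ‖η‖ = 1 → ε ≤ ‖ξ - η‖ → ‖(2⁻¹ : ℝ) • (ξ + η)‖ ≤ 1 - δ

lemma UniformlyConvex.to_uniformConvexSpace {E : Type*} [NormedAddCommGroup E]
    [NormedSpace ℝ E] (hE : UniformlyConvex E) : UniformConvexSpace E := by
  constructor
  intro ε hε
  obtain ⟨δ, hδ, h⟩ := hE (min ε 2) (lt_min hε two_pos) (min_le_right _ _)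
  refine ⟨δ, hδ, fun x hx y hy hxy => ?_⟩
  have := h x y hx hy (le_trans (min_le_left _ _) hxy)
  have h2 : ‖(2⁻¹ : ℝ) • (x + y)‖ = 2⁻¹ * ‖x + y‖ := by
    rw [norm_smul]; norm_num
  rw [h2] at this
  linarith

/-- Circumcenter argument: an almost-invariant vector is close to an invariant vector. -/
lemma exists_fixed_near {G : Type*} [Group G] {E : Type*} [NormedAddCommGroup E]
    [NormedSpace ℝ E] [CompleteSpace E] (hE : UniformlyConvex E)
    (π : G →* (E ≃ₗᵢ[ℝ] E)) (ξ : E) (c : ℝ)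
    (hc : ∀ g : G, ‖π g ξ - ξ‖ ≤ c) :
    ∃ η : E, (∀ g : G, π g η = η) ∧ ‖ξ - η‖ ≤ c := by
  haveI : UniformConvexSpace E := hE.to_uniformConvexSpace
  haveI : Nonempty G := ⟨1⟩
  set f : E → G → ℝ := fun x g => ‖x - π g ξ‖ with hf
  have bdd : ∀ x : E, BddAbove (Set.range (f x)) := by
    intro x
    refine ⟨‖x - ξ‖ + c, ?_⟩
    rintro _ ⟨g, rfl⟩
    calc ‖x - π g ξ‖ ≤ ‖x - ξ‖ + ‖ξ - π g ξ‖ := norm_sub_le_norm_sub_add_norm_sub _ _ _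
      _ ≤ ‖x - ξ‖ + c := by rw [norm_sub_rev ξ (π g ξ)]; exact add_le_add le_rfl (hc g)
  set r : E → ℝ := fun x => ⨆ g : G, f x g with hr
  have hle : ∀ x g, f x g ≤ r x := fun x g => le_ciSup (bdd x) g
  have hrnn : ∀ x, 0 ≤ r x := fun x => le_trans (norm_nonneg _) (hle x 1)
  set r0 : ℝ := ⨅ x : E, r x with hr0
  have bddb : BddBelow (Set.range r) := ⟨0, by rintro _ ⟨x, rfl⟩; exact hrnn x⟩
  have hr0le : ∀ x, r0 ≤ r x := fun x => ciInf_le bddb x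
  have hr0nn : 0 ≤ r0 := le_ciInf hrnn
  have hrξ : r ξ ≤ c := by
    refine ciSup_le fun g => ?_
    rw [show f ξ g = ‖ξ - π g ξ‖ from rfl, norm_sub_rev]; exact hc g
  -- invariance of r under the action
  have hmap : ∀ (g : G) (x : E) (h : G), f (π g x) h = f x (g⁻¹ * h) := by
    intro g x h
    have h1 : π h = π g * π (g⁻¹ * h) := by rw [← map_mul, mul_inv_cancel_left]
    have h2 : (π h) ξ = (π g) ((π (g⁻¹ * h)) ξ) := by rw [h1]; rfl
    simp only [hf, h2, ← map_sub, LinearIsometryEquiv.norm_map]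
  have hrinv : ∀ (g : G) (x : E), r (π g x) = r x := by
    intro g x
    apply le_antisymm
    · refine ciSup_le fun h => ?_
      rw [hmap]; exact hle x _
    · refine ciSup_le fun h => ?_
      have : f x h = f (π g x) (g * h) := by rw [hmap, inv_mul_cancel_left]
      rw [this]; exact hle _ _
  -- the key uniform convexity estimate
  have key : ∀ ε : ℝ, 0 < ε → ∃ δ' : ℝ, 0 < δ' ∧
      ∀ x y : E, r x ≤ r0 + δ' → r y ≤ r0 + δ' → ‖x - y‖ < ε := by
    intro ε hε
    rcases lt_or_ge r0 (ε / 4) with h4 | h4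
    · refine ⟨ε / 4 - r0, by linarith, fun x y hx hy => ?_⟩
      have h1 : ‖x - ξ‖ ≤ ε / 4 := by
        have := hle x 1
        simp only [hf, map_one, LinearIsometryEquiv.coe_one, id_eq] at this
        -- f x 1 = ‖x - π 1 ξ‖ = ‖x - ξ‖
        calc ‖x - ξ‖ = f x 1 := by simp [hf]
          _ ≤ r x := hle x 1
          _ ≤ ε / 4 := by linarith
      have h2 : ‖y - ξ‖ ≤ ε / 4 := by
        calc ‖y - ξ‖ = f y 1 := by simp [hf]
          _ ≤ r y := hle y 1
          _ ≤ ε / 4 := by linarith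
      calc ‖x - y‖ ≤ ‖x - ξ‖ + ‖ξ - y‖ := norm_sub_le_norm_sub_add_norm_sub _ _ _
        _ = ‖x - ξ‖ + ‖y - ξ‖ := by rw [norm_sub_rev ξ]
        _ ≤ ε / 4 + ε / 4 := add_le_add h1 h2
        _ < ε := by linarith
    · have hr0pos : 0 < r0 := lt_of_lt_of_le (by linarith) h4
      have hε' : 0 < ε / (r0 + 1) := div_pos hε (by linarith)
      obtain ⟨δ, hδ, hball⟩ := exists_forall_closed_ball_dist_add_le_two_sub E hε'
      refine ⟨min 1 (δ * r0 / 4), lt_min one_pos (by positivity), fun x y hx hy => ?_⟩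
      set δ' : ℝ := min 1 (δ * r0 / 4) with hδ'
      have hδ'1 : δ' ≤ 1 := min_le_left _ _
      have hδ'2 : δ' ≤ δ * r0 / 4 := min_le_right _ _
      have hδ'pos : 0 < δ' := lt_min one_pos (by positivity)
      by_contra hcon
      push_neg at hcon
      set R : ℝ := r0 + δ' with hR
      have hRpos : 0 < R := by positivity
      set m : E := (2⁻¹ : ℝ) • (x + y) with hm
      have hmdist : ∀ g : G, f m g ≤ (1 - δ / 2) * R := by
        intro g
        set s : E := π g ξ with hs
        have hxa : ‖R⁻¹ • (x - s)‖ ≤ 1 := by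
          rw [norm_smul, Real.norm_eq_abs, abs_of_pos (inv_pos.2 hRpos)]
          rw [inv_mul_le_iff₀ hRpos, mul_one]
          exact (hle x g).trans hx
        have hya : ‖R⁻¹ • (y - s)‖ ≤ 1 := by
          rw [norm_smul, Real.norm_eq_abs, abs_of_pos (inv_pos.2 hRpos)]
          rw [inv_mul_le_iff₀ hRpos, mul_one]
          exact (hle y g).trans hy
        have hdiff : ε / (r0 + 1) ≤ ‖R⁻¹ • (x - s) - R⁻¹ • (y - s)‖ := by
          rw [← smul_sub, norm_smul, Real.norm_eq_abs, abs_of_pos (inv_pos.2 hRpos)]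
          have hxy : x - s - (y - s) = x - y := by abel
          rw [hxy]
          rw [le_inv_mul_iff₀ hRpos]
          calc R * (ε / (r0 + 1)) ≤ (r0 + 1) * (ε / (r0 + 1)) := by
                apply mul_le_mul_of_nonneg_right _ (le_of_lt hε')
                simp [hR]; linarith
            _ = ε := by field_simp
            _ ≤ ‖x - y‖ := hcon
        have hb := hball hxa hya hdiff
        rw [← smul_add, norm_smul, Real.norm_eq_abs, abs_of_pos (inv_pos.2 hRpos),
          inv_mul_le_iff₀ hRpos] at hb
        -- hb : ‖x - s + (y - s)‖ ≤ (2 - δ) * R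
        have hms : m - s = (2⁻¹ : ℝ) • (x - s + (y - s)) := by
          rw [hm]; module
        calc f m g = ‖m - s‖ := rfl
          _ = 2⁻¹ * ‖x - s + (y - s)‖ := by
              rw [hms, norm_smul, Real.norm_eq_abs]; norm_num
          _ ≤ 2⁻¹ * ((2 - δ) * R) := by
              rw [mul_comm (2 - δ) R]
              apply mul_le_mul_of_nonneg_left hb; norm_num
          _ = (1 - δ / 2) * R := by ring
      have hrm : r m ≤ (1 - δ / 2) * R := ciSup_le hmdist
      have := hr0le m
      nlinarith [hδ'2, hδ'pos, hδ.le]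
  -- minimizing sequence
  have hxseq : ∀ n : ℕ, ∃ x : E, r x < r0 + 1 / (n + 1) := by
    intro n
    apply exists_lt_of_ciInf_lt
    rw [← hr0]
    have : (0:ℝ) < 1 / (n + 1) := by positivity
    linarith
  choose x hx using hxseq
  have hcauchy : CauchySeq x := by
    rw [Metric.cauchySeq_iff]
    intro ε hε
    obtain ⟨δ', hδ', hkey⟩ := key ε hε
    obtain ⟨N, hN⟩ := exists_nat_one_div_lt hδ'
    refine ⟨N, fun a ha b hb => ?_⟩
    rw [dist_eq_norm]
    apply hkey
    · have h1 : (1:ℝ) / (a + 1) ≤ 1 / (N + 1) := by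
        apply one_div_le_one_div_of_le (by positivity)
        exact_mod_cast by omega
      linarith [hx a, hN.le]
    · have h1 : (1:ℝ) / (b + 1) ≤ 1 / (N + 1) := by
        apply one_div_le_one_div_of_le (by positivity)
        exact_mod_cast by omega
      linarith [hx b, hN.le]
  obtain ⟨η, hη⟩ := cauchySeq_tendsto_of_complete hcauchy
  have hrη : ∀ g : G, f η g ≤ r0 := by
    intro g
    have ht1 : Filter.Tendsto (fun n => ‖x n - π g ξ‖) Filter.atTop (nhds ‖η - π g ξ‖) :=
      ((hη.sub_const _).norm)
    have ht2 : Filter.Tendsto (fun n : ℕ => r0 + 1 / (n + 1)) Filter.atTop (nhds r0) := by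
      have := tendsto_one_div_add_atTop_nhds_zero_nat (𝕜 := ℝ)
      simpa using tendsto_const_nhds.add this
    exact le_of_tendsto_of_tendsto' ht1 ht2 fun n => (hle (x n) g).trans (hx n).le
  have hrη' : r η = r0 := le_antisymm (ciSup_le hrη) (hr0le η)
  have hfixed : ∀ g : G, π g η = η := by
    intro g
    by_contra hne
    have hpos : 0 < ‖π g η - η‖ := by
      rw [norm_pos_iff, sub_ne_zero]; exact fun h => hne h
    obtain ⟨δ', hδ', hkey⟩ := key _ hpos
    have h1 : r (π g η) = r0 := by rw [hrinv, hrη']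
    have := hkey (π g η) η (by linarith) (by rw [hrη']; linarith)
    exact lt_irrefl _ this
  refine ⟨η, hfixed, ?_⟩
  have : ‖η - ξ‖ ≤ r0 := by
    have := hrη 1
    simpa [hf] using this
  rw [norm_sub_rev] at this
  calc ‖ξ - η‖ ≤ r0 := this
    _ ≤ r ξ := hr0le ξ
    _ ≤ c := hrξ

/-- **Bounded generation and relative property (T_E) imply property (T_E)**: let `G` be a
topological group boundedly generated by subgroups `H 0, …, H (k-1)` (every `g ∈ G` is a
product of at most `ν` elements of the union of the `H i`), let `E` be a uniformly convex real
Banach space, and suppose each pair `(G, H i)` has relative property (T_E).  Then for every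
continuous linear isometric representation `π` of `G` on `E` whose only fixed vector is `0`,
there are a compact `K ⊆ G` and `ε > 0` with `sup_{g ∈ K} ‖π(g)ξ - ξ‖ ≥ ε` for every unit
vector `ξ`. -/
theorem bounded_generation_banach_property_T
    (G : Type*) [Group G] [TopologicalSpace G] [IsTopologicalGroup G]
    (k : ℕ) (H : Fin k → Subgroup G)
    (hbg : ∃ ν : ℕ, ∀ g : G, ∃ l : List G,
      l.length ≤ ν ∧ (∀ x ∈ l, ∃ i : Fin k, x ∈ H i) ∧ l.prod = g)
    (E : Type*) [NormedAddCommGroup E] [NormedSpace ℝ E] [CompleteSpace E]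
    (hE : UniformlyConvex E)
    (hrel : ∀ i : Fin k, ∀ π : G →* (E ≃ₗᵢ[ℝ] E), (∀ ξ : E, Continuous fun g : G => π g ξ) →
      ∀ γ : ℝ, 0 < γ → ∃ K : Set G, IsCompact K ∧ ∃ ε : ℝ, 0 < ε ∧
        ∀ ξ : E, ‖ξ‖ = 1 → (⨆ g : K, ‖π g.1 ξ - ξ‖) < ε →
          ∃ η : E, (∀ h ∈ H i, π h η = η) ∧ ‖ξ - η‖ < γ)
    (π : G →* (E ≃ₗᵢ[ℝ] E)) (hcont : ∀ ξ : E, Continuous fun g : G => π g ξ)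
    (hfix : ∀ ξ : E, (∀ g : G, π g ξ = ξ) → ξ = 0) :
    ∃ K : Set G, IsCompact K ∧ ∃ ε : ℝ, 0 < ε ∧
      ∀ ξ : E, ‖ξ‖ = 1 → ε ≤ ⨆ g : K, ‖π g.1 ξ - ξ‖ := by
  obtain ⟨ν, hν⟩ := hbg
  rcases Nat.eq_zero_or_pos k with hk | hk
  · -- degenerate case: G is trivial, so there are no unit vectors
    subst hk
    refine ⟨∅, isCompact_empty, 1, one_pos, fun ξ hξ => ?_⟩
    exfalso
    have htriv : ∀ g : G, g = 1 := by
      intro g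
      obtain ⟨l, -, hmem, hp⟩ := hν g
      have : l = [] := by
        cases l with
        | nil => rfl
        | cons a t => exact absurd (hmem a (List.mem_cons_self (a := a) (l := t))) (by rintro ⟨⟨i, hi⟩, -⟩; omega)
      rw [this] at hp
      simp at hp
      exact hp.symm
    have : ξ = 0 := hfix ξ (fun g => by rw [htriv g]; simp)
    rw [this] at hξ
    simp at hξ
  · haveI : Nonempty (Fin k) := ⟨⟨0, hk⟩⟩
    set γ : ℝ := (2 * ν + 2)⁻¹ with hγdef
    have hγpos : 0 < γ := by positivity
    choose K hKc εf hεf hmain using fun i => hrel i π hcont γ hγpos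
    set K' : Set G := ⋃ i, K i with hK'
    have hK'c : IsCompact K' := isCompact_iUnion hKc
    set ε : ℝ := Finset.univ.inf' Finset.univ_nonempty εf with hε
    have hεpos : 0 < ε := by
      rw [hε, Finset.lt_inf'_iff]
      exact fun i _ => hεf i
    refine ⟨K', hK'c, ε, hεpos, fun ξ hξ => ?_⟩
    by_contra hcon
    push_neg at hcon
    -- bounded above: norms are at most 2
    have hbdd : BddAbove (Set.range fun g : K' => ‖π g.1 ξ - ξ‖) := by
      refine ⟨2, ?_⟩
      rintro _ ⟨g, rfl⟩
      calc ‖π g.1 ξ - ξ‖ ≤ ‖π g.1 ξ‖ + ‖ξ‖ := norm_sub_le _ _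
        _ = 2 := by rw [LinearIsometryEquiv.norm_map, hξ]; norm_num
    have hsub : ∀ i : Fin k, (⨆ g : K i, ‖π g.1 ξ - ξ‖) < εf i := by
      intro i
      have h1 : (⨆ g : K i, ‖π g.1 ξ - ξ‖) ≤ ⨆ g : K', ‖π g.1 ξ - ξ‖ := by
        rcases Set.eq_empty_or_nonempty (K i) with he | hne
        · rw [he]
          rw [show (⨆ g : (∅ : Set G), ‖π g.1 ξ - ξ‖) = 0 from Real.iSup_of_isEmpty _]
          exact Real.iSup_nonneg fun g => norm_nonneg _
        · haveI := hne.to_subtype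
          exact ciSup_le fun g => le_ciSup_of_le hbdd ⟨g.1, Set.mem_iUnion.2 ⟨i, g.2⟩⟩ le_rfl
      have h2 : ε ≤ εf i := Finset.inf'_le _ (Finset.mem_univ i)
      exact lt_of_le_of_lt h1 (lt_of_lt_of_le hcon h2)
    choose η hηfix hηclose using fun i => hmain i ξ hξ (hsub i)
    -- unit vector almost invariant under each generator
    have hgen : ∀ i : Fin k, ∀ h ∈ H i, ‖π h ξ - ξ‖ ≤ 2 * γ := by
      intro i h hh
      have h1 : π h (η i) = η i := hηfix i h hh
      calc ‖π h ξ - ξ‖ = ‖π h (ξ - η i) + (η i - ξ)‖ := by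
            rw [map_sub, h1]; congr 1; abel
        _ ≤ ‖π h (ξ - η i)‖ + ‖η i - ξ‖ := norm_add_le _ _
        _ = ‖ξ - η i‖ + ‖ξ - η i‖ := by
            rw [LinearIsometryEquiv.norm_map, norm_sub_rev (η i)]
        _ ≤ γ + γ := add_le_add (hηclose i).le (hηclose i).le
        _ = 2 * γ := by ring
    -- almost invariance extends to products
    have hlist : ∀ l : List G, (∀ x ∈ l, ∃ i : Fin k, x ∈ H i) →
        ‖π l.prod ξ - ξ‖ ≤ 2 * γ * l.length := by
      intro l
      induction l with
      | nil => intro _; simp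
      | cons a t ih =>
        intro hmem
        have ha : ‖π a ξ - ξ‖ ≤ 2 * γ := by
          obtain ⟨i, hi⟩ := hmem a (List.mem_cons_self (a := a) (l := t))
          exact hgen i a hi
        have ht := ih (fun x hx => hmem x (List.mem_cons_of_mem a hx))
        have hsplit : π (a * t.prod) ξ - ξ = π a (π t.prod ξ - ξ) + (π a ξ - ξ) := by
          rw [map_sub]
          have : π (a * t.prod) ξ = π a (π t.prod ξ) := by
            rw [map_mul]; rfl
          rw [this]; abel
        calc ‖π (a :: t).prod ξ - ξ‖ = ‖π a (π t.prod ξ - ξ) + (π a ξ - ξ)‖ := by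
              rw [List.prod_cons, hsplit]
          _ ≤ ‖π a (π t.prod ξ - ξ)‖ + ‖π a ξ - ξ‖ := norm_add_le _ _
          _ = ‖π t.prod ξ - ξ‖ + ‖π a ξ - ξ‖ := by rw [LinearIsometryEquiv.norm_map]
          _ ≤ 2 * γ * t.length + 2 * γ := add_le_add ht ha
          _ = 2 * γ * (a :: t).length := by
              simp [List.length_cons]; ring
    -- therefore ξ is uniformly almost invariant under all of G
    have hall : ∀ g : G, ‖π g ξ - ξ‖ ≤ 2 * γ * ν := by
      intro g
      obtain ⟨l, hlen, hmem, hp⟩ := hν g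
      calc ‖π g ξ - ξ‖ = ‖π l.prod ξ - ξ‖ := by rw [hp]
        _ ≤ 2 * γ * l.length := hlist l hmem
        _ ≤ 2 * γ * ν := by
            apply mul_le_mul_of_nonneg_left _ (by positivity)
            exact_mod_cast hlen
    obtain ⟨ηc, hηcfix, hηcclose⟩ := exists_fixed_near hE π ξ (2 * γ * ν) hall
    have : ηc = 0 := hfix ηc hηcfix
    rw [this, sub_zero, hξ] at hηcclose
    -- but 2 γ ν < 1
    have hlt : 2 * γ * ν < 1 := by
      have hν2 : (0:ℝ) < 2 * ν + 2 := by positivity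
      calc 2 * γ * ν = (2 * ν) * (2 * (ν:ℝ) + 2)⁻¹ := by rw [hγdef]; ring
        _ < 1 := by
            rw [mul_inv_lt_iff₀ hν2]
            linarith
    linarith
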